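/- Let P be a finite subset of the Euclidean plane ℝ² with P.ncard = 4 and (Bd(P)).ncard = 3 (so exactly one point of P lies in the interior of the convex hull of the other three). Then (𝒱(P)).ncard = 3, (𝒱^[2](P)).ncard = 1, and 𝒱^[n](P) = ∅ for all n ≥ 3. -/

import Mathlib

open Set

abbrev Plane : Type := EuclideanSpace ℝ (Fin 2)

/-- The Voronoi cell of a generator `p` for a generating set `P`. -/
def cell (P : Set Plane) (p : Plane) : Set Plane :=
  {x : Plane | ∀ q ∈ P, dist x p ≤ dist x q}

/-- The set of nearest generators of `x` in `P`. -/
def nearest (P : Set Plane) (x : Plane) : Set Plane :=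
  {p ∈ P | ∀ q ∈ P, dist x p ≤ dist x q}

/-- The Voronoi vertex set: points with at least 3 nearest generators. -/
def vtx (P : Set Plane) : Set Plane :=
  {x : Plane | 3 ≤ (nearest P x).encard}

/-- The boundary of a point set: its points on the frontier of its convex hull. -/
def Bd (S : Set Plane) : Set Plane :=
  S ∩ frontier (convexHull ℝ S)

/-- The number of instances of cocircularity. -/
noncomputable def Ic (P : Set Plane) : ℤ :=
  ∑ᶠ x ∈ vtx P, (((nearest P x).ncard : ℤ) - 3)

lemma nearest_subset (P : Set Plane) (x : Plane) : nearest P x ⊆ P := fun _ hp => hp.1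

lemma vtx_small {Q : Set Plane} (h : Q.encard ≤ 2) : vtx Q = ∅ := by
  ext x
  simp only [vtx, Set.mem_setOf_eq, Set.mem_empty_iff_false, iff_false, not_le]
  exact lt_of_le_of_lt ((Set.encard_mono (nearest_subset Q x)).trans h) (by norm_num)

lemma strict_inside {Q : Set Plane} {d o : Plane} {r : ℝ}
    (hd : d ∈ interior (convexHull ℝ Q)) (h : ∀ p ∈ Q, dist p o ≤ r) (h0 : 0 < r) :
    dist d o < r := by
  have hsub : convexHull ℝ Q ⊆ Metric.closedBall o r :=
    convexHull_min (fun p hp => Metric.mem_closedBall.2 (h p hp)) (convex_closedBall o r)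
  have := interior_mono hsub hd
  rw [interior_closedBall o h0.ne'] at this
  exact Metric.mem_ball.1 this

lemma circum {p q r : Plane} (h : ¬ Collinear ℝ ({p, q, r} : Set Plane)) :
    ∃! o : Plane, dist o q = dist o p ∧ dist o r = dist o p := by
  have hai : AffineIndependent ℝ ![p, q, r] :=
    affineIndependent_iff_not_collinear_set.2 h
  have hrange : Set.range ![p, q, r] = {p, q, r} := by
    ext x
    constructor
    · rintro ⟨i, rfl⟩; fin_cases i <;> simp
    · rintro (rfl | rfl | rfl)
      exacts [⟨0, rfl⟩, ⟨1, rfl⟩, ⟨2, rfl⟩]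
  have htop : affineSpan ℝ (Set.range ![p, q, r]) = ⊤ := by
    rw [hai.affineSpan_eq_top_iff_card_eq_finrank_add_one]
    simp [finrank_euclideanSpace_fin]
  obtain ⟨cs, ⟨_, hcs2⟩, hcsu⟩ := hai.existsUnique_dist_eq
  rw [hrange] at hcs2
  have hd : ∀ x ∈ ({p, q, r} : Set Plane), dist x cs.center = cs.radius := by
    intro x hx
    exact hcs2 hx
  refine ⟨cs.center, ⟨?_, ?_⟩, ?_⟩
  · rw [dist_comm, dist_comm cs.center p, hd q (by simp), hd p (by simp)]
  · rw [dist_comm, dist_comm cs.center p, hd r (by simp), hd p (by simp)]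
  · rintro o ⟨h1, h2⟩
    have : (⟨o, dist p o⟩ : EuclideanGeometry.Sphere Plane) = cs := by
      apply hcsu
      constructor
      · rw [htop]; exact AffineSubspace.mem_top _ _ _
      · rw [hrange]
        rintro x (rfl | rfl | rfl) <;> simp only [EuclideanGeometry.mem_sphere]
        · rfl
        · simp only [Metric.mem_sphere]; rw [dist_comm]; exact h1.trans (dist_comm o p)
        · simp only [Metric.mem_sphere]; rw [dist_comm]; exact h2.trans (dist_comm o p)
    exact congrArg EuclideanGeometry.Sphere.center this

lemma mem_hull_diff {s : Set Plane} {x y : Plane}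
    (hx : x ∈ interior (convexHull ℝ s)) (hxs : x ∈ s) (hy : y ∈ s) (hyx : y ≠ x) :
    x ∈ convexHull ℝ (s \ {x}) := by
  obtain ⟨ε, hε, hball⟩ := Metric.mem_nhds_iff.1 (mem_interior_iff_mem_nhds.1 hx)
  have hxy : (0:ℝ) < ‖x - y‖ := by
    rw [norm_sub_pos_iff]
    exact fun h => hyx h.symm
  set δ : ℝ := ε / (2 * ‖x - y‖) with hδdef
  have hδ : 0 < δ := by positivity
  set z : Plane := x + δ • (x - y) with hzdef
  have hzball : z ∈ Metric.ball x ε := by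
    rw [Metric.mem_ball, dist_eq_norm]
    have : z - x = δ • (x - y) := by rw [hzdef]; abel
    rw [this, norm_smul, Real.norm_eq_abs, abs_of_pos hδ, hδdef]
    have h : ε / (2 * ‖x - y‖) * ‖x - y‖ = ε / 2 := by field_simp
    rw [h]; linarith
  have hzhull : z ∈ convexHull ℝ s := hball hzball
  have hsins : s = insert x (s \ {x}) := by
    rw [Set.insert_diff_singleton, Set.insert_eq_self.2 hxs]
  rw [hsins, convexHull_insert (⟨y, hy, hyx⟩ : (s \ {x}).Nonempty)] at hzhull
  rw [mem_convexJoin] at hzhull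
  obtain ⟨x', hx', w, hw, hseg⟩ := hzhull
  rw [Set.mem_singleton_iff] at hx'
  rw [hx'] at hseg
  obtain ⟨a, b, ha, hb, hab, heq⟩ : ∃ a b : ℝ, 0 ≤ a ∧ 0 ≤ b ∧ a + b = 1 ∧ a • x + b • w = z := hseg
  rcases eq_or_lt_of_le hb with hb0 | hb0
  · exfalso
    have ha1 : a = 1 := by linarith
    rw [← hb0, ha1, zero_smul, one_smul, add_zero, hzdef] at heq
    have : δ • (x - y) = 0 := by
      have := congrArg (· - x) heq
      simpa using this.symm
    rcases smul_eq_zero.1 this with h | h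
    · exact absurd h (ne_of_gt hδ)
    · rw [sub_eq_zero] at h; exact hyx h.symm
  · have hbδ : (0:ℝ) < b + δ := by linarith
    have key : (b + δ) • x = δ • y + b • w := by
      have ha' : a = 1 - b := by linarith
      rw [ha', hzdef] at heq
      have h2 : b • w = (x + δ • (x - y)) - (1 - b) • x := by rw [← heq]; abel
      rw [h2]
      module
    have hxeq : x = (δ / (b + δ)) • y + (b / (b + δ)) • w := by
      refine smul_right_injective Plane hbδ.ne' ?_
      show (b + δ) • x = (b + δ) • ((δ / (b + δ)) • y + (b / (b + δ)) • w)
      have e1 : (b + δ) * (δ / (b + δ)) = δ := by field_simp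
      have e2 : (b + δ) * (b / (b + δ)) = b := by field_simp
      rw [key, smul_add, smul_smul, smul_smul, e1, e2]
    have hmem : (δ / (b + δ)) • y + (b / (b + δ)) • w ∈ convexHull ℝ (s \ {x}) := by
      refine (convex_convexHull ℝ (s \ {x}))
        (subset_convexHull ℝ _ ⟨hy, hyx⟩) hw ?_ ?_ ?_
      · positivity
      · positivity
      · rw [← add_div, add_comm, div_self hbδ.ne']
    rwa [← hxeq] at hmem

lemma ncol_aux {u v w d : Plane}
    (hd : d ∈ interior (convexHull ℝ ({u, v, w} : Set Plane)))
    (huvw : ¬ Collinear ℝ ({u, v, w} : Set Plane))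
    (htop : affineSpan ℝ ({u, v, w} : Set Plane) = ⊤) :
    ¬ Collinear ℝ ({u, v, d} : Set Plane) := by
  have hai : AffineIndependent ℝ ![u, v, w] :=
    affineIndependent_iff_not_collinear_set.2 huvw
  have hrange : Set.range ![u, v, w] = {u, v, w} := by
    ext x
    constructor
    · rintro ⟨i, rfl⟩; fin_cases i <;> simp
    · rintro (rfl | rfl | rfl)
      exacts [⟨0, rfl⟩, ⟨1, rfl⟩, ⟨2, rfl⟩]
  set B : AffineBasis (Fin 3) ℝ Plane := ⟨![u, v, w], hai, by rw [hrange]; exact htop⟩ with hB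
  have hBcoe : (B : Fin 3 → Plane) = ![u, v, w] := rfl
  have hd' : d ∈ interior (convexHull ℝ (Set.range (B : Fin 3 → Plane))) := by
    rw [hBcoe, hrange]; exact hd
  rw [B.interior_convexHull] at hd'
  have hpos : 0 < B.coord 2 d := hd' 2
  intro hcol
  have huv : u ≠ v := by
    rintro rfl
    apply huvw
    have : ({u, u, w} : Set Plane) = {u, w} := by ext x; simp
    rw [this]
    exact collinear_pair ℝ u w
  have hdline : d ∈ affineSpan ℝ ({u, v} : Set Plane) :=
    hcol.mem_affineSpan_of_mem_of_ne (by simp) (by simp) (by simp) huv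
  have : (d -ᵥ u) +ᵥ u ∈ affineSpan ℝ ({u, v} : Set Plane) := by simpa using hdline
  obtain ⟨t, ht⟩ := vadd_left_mem_affineSpan_pair.1 this
  have hdeq : d = AffineMap.lineMap u v t := by
    rw [AffineMap.lineMap_apply, ht]; simp
  have hu0 : B.coord 2 u = 0 := by
    have : u = B 0 := rfl
    rw [this, B.coord_apply_ne (by decide)]
  have hv0 : B.coord 2 v = 0 := by
    have : v = B 1 := rfl
    rw [this, B.coord_apply_ne (by decide)]
  have : B.coord 2 d = 0 := by
    rw [hdeq, AffineMap.apply_lineMap, hu0, hv0]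
    simp [AffineMap.lineMap_apply]
  rw [this] at hpos
  exact lt_irrefl 0 hpos

lemma vtx_triple {p q r : Plane} (h : ¬ Collinear ℝ ({p, q, r} : Set Plane)) :
    ∃ z : Plane, vtx {p, q, r} = {z} := by
  have hpq : p ≠ q := by
    rintro rfl
    apply h
    have : ({p, p, r} : Set Plane) = {p, r} := by ext x; simp
    rw [this]; exact collinear_pair ℝ p r
  have hpr : p ≠ r := by
    rintro rfl
    apply h
    have : ({p, q, p} : Set Plane) = {p, q} := by ext x; simp; tauto
    rw [this]; exact collinear_pair ℝ p q
  have hqr : q ≠ r := by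
    rintro rfl
    apply h
    have : ({p, q, q} : Set Plane) = {p, q} := by ext x; simp
    rw [this]; exact collinear_pair ℝ p q
  have hcard : ({p, q, r} : Set Plane).encard = 3 := by
    rw [Set.encard_insert_of_notMem (by simp [hpq, hpr]), Set.encard_pair hqr]
    rfl
  obtain ⟨o, ⟨h1, h2⟩, hu⟩ := circum h
  refine ⟨o, ?_⟩
  ext x
  simp only [vtx, Set.mem_setOf_eq, Set.mem_singleton_iff]
  constructor
  · intro hx
    have hNeq : nearest {p, q, r} x = {p, q, r} :=
      (Set.toFinite _).eq_of_subset_of_encard_le' (nearest_subset _ _) (by rw [hcard]; exact hx)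
    have hp : p ∈ nearest {p, q, r} x := by rw [hNeq]; simp
    have hq : q ∈ nearest {p, q, r} x := by rw [hNeq]; simp
    have hr : r ∈ nearest {p, q, r} x := by rw [hNeq]; simp
    exact hu x ⟨le_antisymm (hq.2 p (by simp)) (hp.2 q (by simp)),
      le_antisymm (hr.2 p (by simp)) (hp.2 r (by simp))⟩
  · intro hxo
    rw [hxo]
    have req : ∀ s ∈ ({p, q, r} : Set Plane), dist o s = dist o p := by
      rintro s (rfl | rfl | rfl)
      · rfl
      · exact h1
      · exact h2
    have hsub : ({p, q, r} : Set Plane) ⊆ nearest {p, q, r} o := by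
      intro y hy
      exact ⟨hy, fun s hs => by rw [req y hy, req s hs]⟩
    calc (3 : ℕ∞) = ({p, q, r} : Set Plane).encard := hcard.symm
      _ ≤ _ := Set.encard_mono hsub

theorem four_points_three_on_boundary (P : Set Plane) (hP : P.Finite)
    (h4 : P.ncard = 4) (hbd : (Bd P).ncard = 3) :
    (vtx P).ncard = 3 ∧ (vtx^[2] P).ncard = 1 ∧
      ∀ n : ℕ, 3 ≤ n → vtx^[n] P = ∅ := by
  -- setup
  have hBd_sub : Bd P ⊆ P := Set.inter_subset_left
  obtain ⟨a, b, c, hab, hac, hbc, hBdeq⟩ := Set.ncard_eq_three.1 hbd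
  have hne : Bd P ≠ P := by
    intro h
    rw [h, h4] at hbd
    norm_num at hbd
  obtain ⟨d, hdP, hdBd⟩ := Set.exists_of_ssubset (hBd_sub.ssubset_of_ne hne)
  have hdabc : d ∉ ({a, b, c} : Set Plane) := by rwa [← hBdeq]
  have hda : d ≠ a := fun h => hdabc (by simp [h])
  have hdb : d ≠ b := fun h => hdabc (by simp [h])
  have hdc : d ≠ c := fun h => hdabc (by simp [h])
  have hPdiff : P \ {d} = ({a, b, c} : Set Plane) := by
    rw [← hBdeq]
    refine (Set.eq_of_subset_of_ncard_le ?_ ?_ hP.diff).symm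
    · intro y hy
      simp only [Set.mem_diff, Set.mem_singleton_iff]
      exact ⟨hBd_sub hy, fun h => hdBd (h ▸ hy)⟩
    rw [Set.ncard_diff_singleton_of_mem hdP, h4, hbd]
  have hPeq : P = insert d ({a, b, c} : Set Plane) := by
    rw [← hPdiff, Set.insert_diff_singleton, Set.insert_eq_self.2 hdP]
  have hPmem : ∀ p, p ∈ P ↔ p = d ∨ p = a ∨ p = b ∨ p = c := by
    intro p; rw [hPeq]; simp
  have haP : a ∈ P := (hPmem a).2 (Or.inr (Or.inl rfl))
  have hbP : b ∈ P := (hPmem b).2 (Or.inr (Or.inr (Or.inl rfl)))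
  have hcP : c ∈ P := (hPmem c).2 (Or.inr (Or.inr (Or.inr rfl)))
  -- d is interior to the hull
  have hd_int : d ∈ interior (convexHull ℝ P) := by
    have hdcl : d ∈ closure (convexHull ℝ P) :=
      subset_closure (subset_convexHull ℝ P hdP)
    have : d ∉ frontier (convexHull ℝ P) := fun h => hdBd ⟨hdP, h⟩
    rw [frontier, Set.mem_diff] at this
    push_neg at this
    exact this hdcl
  -- hull reduction
  have hdmem : d ∈ convexHull ℝ ({a, b, c} : Set Plane) := by
    rw [← hPdiff]
    exact mem_hull_diff hd_int hdP haP hda.symm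
  have hhull : convexHull ℝ P = convexHull ℝ ({a, b, c} : Set Plane) := by
    apply Set.Subset.antisymm
    · apply convexHull_min _ (convex_convexHull ℝ _)
      intro p hp
      rcases (hPmem p).1 hp with rfl | rfl | rfl | rfl
      · exact hdmem
      · exact subset_convexHull ℝ _ (by simp)
      · exact subset_convexHull ℝ _ (by simp)
      · exact subset_convexHull ℝ _ (by simp)
    · exact convexHull_mono (by rw [hPeq]; exact Set.subset_insert _ _)
  have hd_int' : d ∈ interior (convexHull ℝ ({a, b, c} : Set Plane)) := hhull ▸ hd_int
  -- {a,b,c} is not collinear and spans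
  have htop : affineSpan ℝ ({a, b, c} : Set Plane) = ⊤ :=
    affineSpan_eq_top_of_nonempty_interior ⟨d, hd_int'⟩
  have habc : ¬ Collinear ℝ ({a, b, c} : Set Plane) := by
    intro hcol
    have h1 : Module.finrank ℝ (vectorSpan ℝ ({a, b, c} : Set Plane)) ≤ 1 :=
      hcol.finrank_le_one
    have h2 : vectorSpan ℝ ({a, b, c} : Set Plane) = ⊤ := by
      exact AffineSubspace.vectorSpan_eq_top_of_affineSpan_eq_top _ _ _ htop
    rw [h2] at h1
    rw [finrank_top] at h1
    simp [finrank_euclideanSpace_fin] at h1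
  -- permuted versions
  have hacb : ({a, c, b} : Set Plane) = {a, b, c} := by ext x; simp; tauto
  have hbca : ({b, c, a} : Set Plane) = {a, b, c} := by ext x; simp; tauto
  -- non-collinearity of triples containing d
  have habd : ¬ Collinear ℝ ({a, b, d} : Set Plane) := ncol_aux hd_int' habc htop
  have hacd : ¬ Collinear ℝ ({a, c, d} : Set Plane) :=
    ncol_aux (hacb ▸ hd_int') (hacb ▸ habc) (hacb ▸ htop)
  have hbcd : ¬ Collinear ℝ ({b, c, d} : Set Plane) :=
    ncol_aux (hbca ▸ hd_int') (hbca ▸ habc) (hbca ▸ htop)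
  -- circumcenters
  obtain ⟨o3, ⟨e3b, e3d⟩, u3⟩ := circum habd
  obtain ⟨o2, ⟨e2c, e2d⟩, u2⟩ := circum hacd
  obtain ⟨o1, ⟨e1c, e1d⟩, u1⟩ := circum hbcd
  -- strict outside facts
  have hout3 : dist o3 a < dist o3 c := by
    by_contra hle
    push_neg at hle
    have h0 : 0 < dist o3 a := by
      rcases eq_or_lt_of_le (dist_nonneg : (0:ℝ) ≤ dist o3 a) with h | h
      · exfalso
        have h1 : o3 = a := dist_eq_zero.1 h.symm
        have h2 : o3 = d := dist_eq_zero.1 (by rw [e3d]; exact h.symm)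
        exact hda (h2.symm.trans h1)
      · exact h
    have hall : ∀ p ∈ P, dist p o3 ≤ dist o3 a := by
      intro p hp
      rcases (hPmem p).1 hp with rfl | rfl | rfl | rfl
      · rw [dist_comm p o3]; exact le_of_eq e3d
      · rw [dist_comm p o3]
      · rw [dist_comm p o3]; exact le_of_eq e3b
      · rw [dist_comm p o3]; exact hle
    have := strict_inside hd_int hall h0
    rw [dist_comm d o3, e3d] at this
    exact lt_irrefl _ this
  have hout2 : dist o2 a < dist o2 b := by
    by_contra hle
    push_neg at hle
    have h0 : 0 < dist o2 a := by
      rcases eq_or_lt_of_le (dist_nonneg : (0:ℝ) ≤ dist o2 a) with h | h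
      · exfalso
        have h1 : o2 = a := dist_eq_zero.1 h.symm
        have h2 : o2 = d := dist_eq_zero.1 (by rw [e2d]; exact h.symm)
        exact hda (h2.symm.trans h1)
      · exact h
    have hall : ∀ p ∈ P, dist p o2 ≤ dist o2 a := by
      intro p hp
      rcases (hPmem p).1 hp with rfl | rfl | rfl | rfl
      · rw [dist_comm p o2]; exact le_of_eq e2d
      · rw [dist_comm p o2]
      · rw [dist_comm p o2]; exact hle
      · rw [dist_comm p o2]; exact le_of_eq e2c
    have := strict_inside hd_int hall h0
    rw [dist_comm d o2, e2d] at this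
    exact lt_irrefl _ this
  have hout1 : dist o1 b < dist o1 a := by
    by_contra hle
    push_neg at hle
    have h0 : 0 < dist o1 b := by
      rcases eq_or_lt_of_le (dist_nonneg : (0:ℝ) ≤ dist o1 b) with h | h
      · exfalso
        have h1 : o1 = b := dist_eq_zero.1 h.symm
        have h2 : o1 = d := dist_eq_zero.1 (by rw [e1d]; exact h.symm)
        exact hdb (h2.symm.trans h1)
      · exact h
    have hall : ∀ p ∈ P, dist p o1 ≤ dist o1 b := by
      intro p hp
      rcases (hPmem p).1 hp with rfl | rfl | rfl | rfl
      · rw [dist_comm p o1]; exact le_of_eq e1d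
      · rw [dist_comm p o1]; exact hle
      · rw [dist_comm p o1]
      · rw [dist_comm p o1]; exact le_of_eq e1c
    have := strict_inside hd_int hall h0
    rw [dist_comm d o1, e1d] at this
    exact lt_irrefl _ this
  have had' : a ≠ d := hda.symm
  have hbd' : b ≠ d := hdb.symm
  have hcd' : c ≠ d := hdc.symm
  have hEabc : ({a, b, c} : Set Plane).encard = 3 := by
    rw [Set.encard_insert_of_notMem (by simp [hab, hac]), Set.encard_pair hbc]; rfl
  have hEacd : ({a, c, d} : Set Plane).encard = 3 := by
    rw [Set.encard_insert_of_notMem (by simp [hac, had']), Set.encard_pair hcd']; rfl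
  have hEbcd : ({b, c, d} : Set Plane).encard = 3 := by
    rw [Set.encard_insert_of_notMem (by simp [hbc, hbd']), Set.encard_pair hcd']; rfl
  have hEabd : ({a, b, d} : Set Plane).encard = 3 := by
    rw [Set.encard_insert_of_notMem (by simp [hab, had']), Set.encard_pair hbd']; rfl
  -- characterization of vtx P
  have hvtxP : vtx P = {o1, o2, o3} := by
    ext x
    simp only [vtx, Set.mem_setOf_eq, Set.mem_insert_iff, Set.mem_singleton_iff]
    constructor
    · intro hx
      have hNP : nearest P x ⊆ P := nearest_subset P x
      have hEqd : ∀ p ∈ nearest P x, ∀ q ∈ nearest P x, dist x p = dist x q :=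
        fun p hp q hq => le_antisymm (hp.2 q hq.1) (hq.2 p hp.1)
      by_cases hdN : d ∈ nearest P x
      · by_cases haN : a ∈ nearest P x
        · by_cases hbN : b ∈ nearest P x
          · exact Or.inr (Or.inr (u3 x ⟨hEqd b hbN a haN, hEqd d hdN a haN⟩))
          · have hsub : nearest P x ⊆ ({a, c, d} : Set Plane) := by
              intro p hp
              rcases (hPmem p).1 (hNP hp) with rfl | rfl | rfl | rfl
              · simp
              · simp
              · exact absurd hp hbN
              · simp
            have hNeq : nearest P x = ({a, c, d} : Set Plane) :=
              (Set.toFinite _).eq_of_subset_of_encard_le' hsub (by rw [hEacd]; exact hx)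
            have hcN : c ∈ nearest P x := by rw [hNeq]; simp
            exact Or.inr (Or.inl (u2 x ⟨hEqd c hcN a haN, hEqd d hdN a haN⟩))
        · have hsub : nearest P x ⊆ ({b, c, d} : Set Plane) := by
            intro p hp
            rcases (hPmem p).1 (hNP hp) with rfl | rfl | rfl | rfl
            · simp
            · exact absurd hp haN
            · simp
            · simp
          have hNeq : nearest P x = ({b, c, d} : Set Plane) :=
            (Set.toFinite _).eq_of_subset_of_encard_le' hsub (by rw [hEbcd]; exact hx)
          have hbN : b ∈ nearest P x := by rw [hNeq]; simp
          have hcN : c ∈ nearest P x := by rw [hNeq]; simp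
          exact Or.inl (u1 x ⟨hEqd c hcN b hbN, hEqd d hdN b hbN⟩)
      · exfalso
        have hsub : nearest P x ⊆ ({a, b, c} : Set Plane) := by
          intro p hp
          rcases (hPmem p).1 (hNP hp) with rfl | rfl | rfl | rfl
          · exact absurd hp hdN
          · simp
          · simp
          · simp
        have hNeq : nearest P x = ({a, b, c} : Set Plane) :=
          (Set.toFinite _).eq_of_subset_of_encard_le' hsub (by rw [hEabc]; exact hx)
        have haN : a ∈ nearest P x := by rw [hNeq]; simp
        have hbN : b ∈ nearest P x := by rw [hNeq]; simp
        have hcN : c ∈ nearest P x := by rw [hNeq]; simp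
        have h0 : 0 < dist x a := by
          rcases eq_or_lt_of_le (dist_nonneg : (0:ℝ) ≤ dist x a) with h | h
          · exfalso
            have h1 : x = a := dist_eq_zero.1 h.symm
            have h2 : x = b := dist_eq_zero.1 ((hEqd b hbN a haN).trans h.symm)
            exact hab (h1.symm.trans h2)
          · exact h
        have hle : ∀ p ∈ ({a, b, c} : Set Plane), dist p x ≤ dist x a := by
          rintro p (rfl | rfl | rfl)
          · rw [dist_comm p x]
          · rw [dist_comm p x]; exact le_of_eq (hEqd p hbN a haN)
          · rw [dist_comm p x]; exact le_of_eq (hEqd p hcN a haN)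
        have hlt := strict_inside hd_int' hle h0
        have hmin := haN.2 d hdP
        rw [dist_comm d x] at hlt
        exact absurd hmin (not_le.2 hlt)
    · rintro (rfl | rfl | rfl)
      · have hsub : ({b, c, d} : Set Plane) ⊆ nearest P x := by
          rintro y (rfl | rfl | rfl)
          · refine ⟨hbP, ?_⟩
            intro q hq
            rcases (hPmem q).1 hq with rfl | rfl | rfl | rfl
            · exact le_of_eq e1d.symm
            · exact le_of_lt hout1
            · exact le_refl _
            · exact le_of_eq e1c.symm
          · refine ⟨hcP, ?_⟩
            intro q hq
            rw [e1c]
            rcases (hPmem q).1 hq with rfl | rfl | rfl | rfl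
            · exact le_of_eq e1d.symm
            · exact le_of_lt hout1
            · exact le_refl _
            · exact le_of_eq e1c.symm
          · refine ⟨hdP, ?_⟩
            intro q hq
            rw [e1d]
            rcases (hPmem q).1 hq with rfl | rfl | rfl | rfl
            · exact le_of_eq e1d.symm
            · exact le_of_lt hout1
            · exact le_refl _
            · exact le_of_eq e1c.symm
        calc (3:ℕ∞) = ({b, c, d} : Set Plane).encard := hEbcd.symm
          _ ≤ _ := Set.encard_mono hsub
      · have hsub : ({a, c, d} : Set Plane) ⊆ nearest P x := by
          have hmin : ∀ q ∈ P, dist x a ≤ dist x q := by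
            intro q hq
            rcases (hPmem q).1 hq with rfl | rfl | rfl | rfl
            · exact le_of_eq e2d.symm
            · exact le_refl _
            · exact le_of_lt hout2
            · exact le_of_eq e2c.symm
          rintro y (rfl | rfl | rfl)
          · exact ⟨haP, hmin⟩
          · exact ⟨hcP, fun q hq => e2c ▸ hmin q hq⟩
          · exact ⟨hdP, fun q hq => e2d ▸ hmin q hq⟩
        calc (3:ℕ∞) = ({a, c, d} : Set Plane).encard := hEacd.symm
          _ ≤ _ := Set.encard_mono hsub
      · have hsub : ({a, b, d} : Set Plane) ⊆ nearest P x := by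
          have hmin : ∀ q ∈ P, dist x a ≤ dist x q := by
            intro q hq
            rcases (hPmem q).1 hq with rfl | rfl | rfl | rfl
            · exact le_of_eq e3d.symm
            · exact le_refl _
            · exact le_of_eq e3b.symm
            · exact le_of_lt hout3
          rintro y (rfl | rfl | rfl)
          · exact ⟨haP, hmin⟩
          · exact ⟨hbP, fun q hq => e3b ▸ hmin q hq⟩
          · exact ⟨hdP, fun q hq => e3d ▸ hmin q hq⟩
        calc (3:ℕ∞) = ({a, b, d} : Set Plane).encard := hEabd.symm
          _ ≤ _ := Set.encard_mono hsub
  -- distinctness of the circumcenters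
  have h12 : o1 ≠ o2 := by
    intro h
    rw [h] at hout1 e1d
    linarith [e1d, e2d, hout1]
  have h13 : o1 ≠ o3 := by
    intro h
    rw [h] at hout1 e1d
    linarith [e1d, e3d, hout1]
  have h23 : o2 ≠ o3 := by
    intro h
    rw [h] at hout2
    linarith [e3b, hout2]
  -- the three circumcenters are not collinear
  have hocol : ¬ Collinear ℝ ({o1, o2, o3} : Set Plane) := by
    intro hcol
    have h2m : o2 ∈ AffineSubspace.perpBisector a d :=
      AffineSubspace.mem_perpBisector_iff_dist_eq.2 e2d.symm
    have h3m : o3 ∈ AffineSubspace.perpBisector a d :=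
      AffineSubspace.mem_perpBisector_iff_dist_eq.2 e3d.symm
    have h1m : o1 ∈ affineSpan ℝ ({o2, o3} : Set Plane) :=
      hcol.mem_affineSpan_of_mem_of_ne (by simp) (by simp) (by simp) h23
    have hle : affineSpan ℝ ({o2, o3} : Set Plane) ≤ AffineSubspace.perpBisector a d := by
      rw [affineSpan_le]
      rintro y (rfl | rfl)
      exacts [h2m, h3m]
    have := AffineSubspace.mem_perpBisector_iff_dist_eq.1 (hle h1m)
    rw [e1d] at this
    linarith [hout1]
  obtain ⟨z, hz⟩ := vtx_triple hocol
  have h2iter : vtx^[2] P = {z} := by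
    have : vtx^[2] P = vtx (vtx P) := rfl
    rw [this, hvtxP, hz]
  have h3iter : vtx^[3] P = ∅ := by
    have : vtx^[3] P = vtx (vtx^[2] P) := Function.iterate_succ_apply' vtx 2 P
    rw [this, h2iter]
    exact vtx_small (by rw [Set.encard_singleton]; exact one_le_two)
  refine ⟨?_, ?_, ?_⟩
  · rw [hvtxP]
    exact Set.ncard_eq_three.2 ⟨o1, o2, o3, h12, h13, h23, rfl⟩
  · rw [h2iter]
    exact Set.ncard_singleton z
  · intro n hn
    obtain ⟨k, rfl⟩ := Nat.exists_eq_add_of_le hn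
    rw [Nat.add_comm, Function.iterate_add_apply, h3iter]
    exact Function.iterate_fixed (vtx_small (by simp)) k
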